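/- Let d ≥ 5 be an integer, let 0 < a₁ < ⋯ < a_{d−1} < p and 0 < b₁ < ⋯ < b_{d−2} < p be integers with p prime. Then the binary forms F₁(X,Y) = X·∏_{i=1}^{d−1}(X − a_iY) and F₂(X,Y) = (X − pY)·X·∏_{j=1}^{d−2}(X − b_jY) are not GL(2,ℚ)-isomorphic. -/

import Mathlib

open Finset

private lemma aux_not_dvd (p : ℕ) (m : ℤ) (hm : m ≠ 0) (h1 : -(p:ℤ) < m) (h2 : m < p) :
    ¬ (p:ℤ) ∣ m := by
  intro h
  have hle : (p:ℤ) ≤ |m| := Int.le_of_dvd (abs_pos.mpr hm) ((dvd_abs _ _).mpr h)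
  have hlt : |m| < p := abs_lt.mpr ⟨h1, h2⟩
  omega

/-- For d ≥ 5, integers 0 < a₁ < ⋯ < a_{d−1} < p and 0 < b₁ < ⋯ < b_{d−2} < p with
p prime, the binary forms X·∏(X − a_iY) and (X − pY)·X·∏(X − b_jY) are not
GL(2,ℚ)-isomorphic. -/
theorem stmt_13 (d : ℕ) (hd : 5 ≤ d) (p : ℕ) (hp : p.Prime)
    (a : Fin (d - 1) → ℕ) (ha0 : ∀ i, 0 < a i) (hamono : StrictMono a) (hap : ∀ i, a i < p)
    (b : Fin (d - 2) → ℕ) (hb0 : ∀ j, 0 < b j) (hbmono : StrictMono b) (hbp : ∀ j, b j < p) :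
    ¬ ∃ M : Matrix (Fin 2) (Fin 2) ℚ, M.det ≠ 0 ∧ ∀ x y : ℚ,
        x * ∏ i, (x - (a i : ℚ) * y) =
          ((M 0 0 * x + M 0 1 * y) - (p : ℚ) * (M 1 0 * x + M 1 1 * y)) *
            (M 0 0 * x + M 0 1 * y) *
            ∏ j, ((M 0 0 * x + M 0 1 * y) - (b j : ℚ) * (M 1 0 * x + M 1 1 * y)) := by
  rintro ⟨M, hdet, hM⟩
  have hp0 : 0 < p := hp.pos
  -- notation
  have hD0 : M 0 0 * M 1 1 - M 0 1 * M 1 0 ≠ 0 := by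
    rw [← Matrix.det_fin_two]; exact hdet
  -- the predicate "z is a root of F₁(·,1)"
  set R : ℚ → Prop := fun z => z = 0 ∨ ∃ i, z = (a i : ℚ) with hR
  -- Step A: for each root z, the denominator is nonzero and the image is a root of F₂
  have stepA : ∀ z : ℚ, R z →
      (M 1 0 * z + M 1 1) ≠ 0 ∧
      ((M 0 0 * z + M 0 1) = p * (M 1 0 * z + M 1 1) ∨ (M 0 0 * z + M 0 1) = 0 ∨
        ∃ j, (M 0 0 * z + M 0 1) = (b j : ℚ) * (M 1 0 * z + M 1 1)) := by
    intro z hz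
    have h0 : z * ∏ i, (z - (a i : ℚ) * 1) = 0 := by
      rcases hz with rfl | ⟨i, rfl⟩
      · simp
      · exact mul_eq_zero_of_right _ (Finset.prod_eq_zero (mem_univ i) (by ring))
    have h1 := hM z 1
    rw [h0] at h1
    simp only [mul_one] at h1
    have h1 := h1.symm
    have hvz : (M 1 0 * z + M 1 1) ≠ 0 := by
      intro hv
      have huz : (M 0 0 * z + M 0 1) = 0 := by
        rcases mul_eq_zero.mp h1 with h | h
        · rcases mul_eq_zero.mp h with h | h
          · linear_combination h + (p : ℚ) * hv
          · exact h
        · obtain ⟨j, _, h⟩ := Finset.prod_eq_zero_iff.mp h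
          linear_combination h + (b j : ℚ) * hv
      exact hD0 (by linear_combination M 0 0 * hv - M 1 0 * huz)
    refine ⟨hvz, ?_⟩
    rcases mul_eq_zero.mp h1 with h | h
    · rcases mul_eq_zero.mp h with h | h
      · exact Or.inl (by linear_combination h)
      · exact Or.inr (Or.inl h)
    · obtain ⟨j, _, h⟩ := Finset.prod_eq_zero_iff.mp h
      exact Or.inr (Or.inr ⟨j, by linear_combination h⟩)
  set φ : ℚ → ℚ := fun z => (M 0 0 * z + M 0 1) / (M 1 0 * z + M 1 1) with hφ
  -- values of φ on roots
  have stepA' : ∀ z : ℚ, R z → φ z = p ∨ φ z = 0 ∨ ∃ j, φ z = (b j : ℚ) := by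
    intro z hz
    obtain ⟨hv, hc⟩ := stepA z hz
    rcases hc with h | h | ⟨j, h⟩
    · exact Or.inl (by rw [hφ]; dsimp only; rw [div_eq_iff hv]; linear_combination h)
    · exact Or.inr (Or.inl (by rw [hφ]; simp [h]))
    · exact Or.inr (Or.inr ⟨j, by rw [hφ]; dsimp only; rw [div_eq_iff hv]; linear_combination h⟩)
  -- cross-ratio-type identity
  have key : ∀ z w : ℚ, R z → R w →
      z - w = (φ z - φ w) * ((M 1 0 * z + M 1 1) * (M 1 0 * w + M 1 1)) /
        (M 0 0 * M 1 1 - M 0 1 * M 1 0) := by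
    intro z w hz hw
    have hvz := (stepA z hz).1
    have hvw := (stepA w hw).1
    rw [hφ]
    dsimp only
    rw [eq_div_iff hD0, div_sub_div _ _ hvz hvw, div_mul_cancel₀ _ (mul_ne_zero hvz hvw)]
    ring
  -- finsets of roots
  set T : Finset ℚ := insert 0 ((univ : Finset (Fin (d-1))).image (fun i => (a i : ℚ))) with hT
  set S : Finset ℚ := insert (p : ℚ) (insert 0 ((univ : Finset (Fin (d-2))).image (fun j => (b j : ℚ)))) with hS
  have hmemT : ∀ z : ℚ, z ∈ T ↔ R z := by
    intro z
    simp [hT, hR, eq_comm]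
  have hainj : Function.Injective (fun i : Fin (d-1) => (a i : ℚ)) := by
    intro i j h
    have h' : (a i : ℚ) = (a j : ℚ) := h
    exact hamono.injective (by exact_mod_cast h')
  have hbinj : Function.Injective (fun j : Fin (d-2) => (b j : ℚ)) := by
    intro i j h
    have h' : (b i : ℚ) = (b j : ℚ) := h
    exact hbmono.injective (by exact_mod_cast h')
  have hcardT : T.card = d := by
    rw [hT, Finset.card_insert_of_notMem, Finset.card_image_of_injective _ hainj]
    · simp; omega
    · intro h
      obtain ⟨i, -, hi⟩ := Finset.mem_image.mp h
      have h0 := ha0 i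
      have : (a i : ℚ) ≠ 0 := by positivity
      exact this hi
  have hcardS : S.card = d := by
    have h1 : (0 : ℚ) ∉ (univ : Finset (Fin (d-2))).image (fun j => (b j : ℚ)) := by
      intro h
      obtain ⟨j, -, hj⟩ := Finset.mem_image.mp h
      have h0 := hb0 j
      have : (b j : ℚ) ≠ 0 := by positivity
      exact this hj
    have h2 : (p : ℚ) ∉ insert (0:ℚ) ((univ : Finset (Fin (d-2))).image (fun j => (b j : ℚ))) := by
      intro h
      rcases Finset.mem_insert.mp h with h | h
      · exact (by exact_mod_cast hp0.ne' : (p:ℚ) ≠ 0) h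
      · obtain ⟨j, -, hj⟩ := Finset.mem_image.mp h
        have : (b j : ℚ) < p := by exact_mod_cast hbp j
        rw [hj] at this; exact lt_irrefl _ this
    rw [hS, Finset.card_insert_of_notMem h2, Finset.card_insert_of_notMem h1,
      Finset.card_image_of_injective _ hbinj]
    simp; omega
  -- φ maps T into S
  have hmaps : ∀ z ∈ T, φ z ∈ S := by
    intro z hz
    rcases stepA' z ((hmemT z).mp hz) with h | h | ⟨j, h⟩
    · rw [hS]; simp [h]
    · rw [hS]; simp [h]
    · rw [hS]; simp only [Finset.mem_insert, Finset.mem_image]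
      exact Or.inr (Or.inr ⟨j, mem_univ j, h.symm⟩)
  -- φ injective on T
  have hinj : Set.InjOn φ T := by
    intro z hz w hw h
    have := key z w ((hmemT z).mp hz) ((hmemT w).mp hw)
    rw [h, sub_self, zero_mul, zero_div] at this
    linarith [this]
  -- image equals S
  have himg : T.image φ = S := by
    apply Finset.eq_of_subset_of_card_le
    · intro s hs
      obtain ⟨z, hz, rfl⟩ := Finset.mem_image.mp hs
      exact hmaps z hz
    · rw [Finset.card_image_of_injOn hinj, hcardT, hcardS]
  -- pick the two smallest b's
  have hd2 : 1 < d - 2 := by omega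
  set j0 : Fin (d-2) := ⟨0, by omega⟩ with hj0
  set j1 : Fin (d-2) := ⟨1, by omega⟩ with hj1
  have hbne : b j0 ≠ b j1 := ne_of_lt (hbmono (by rw [hj0, hj1]; exact Fin.mk_lt_mk.mpr one_pos))
  -- preimages
  have hget : ∀ s ∈ S, ∃ z, z ∈ T ∧ φ z = s := by
    intro s hs
    rw [← himg] at hs
    obtain ⟨z, hz, h⟩ := Finset.mem_image.mp hs
    exact ⟨z, hz, h⟩
  obtain ⟨z1, hz1T, hz1⟩ := hget (p : ℚ) (by rw [hS]; simp)
  obtain ⟨z2, hz2T, hz2⟩ := hget (0 : ℚ) (by rw [hS]; simp)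
  obtain ⟨z3, hz3T, hz3⟩ := hget (b j0 : ℚ) (by
    rw [hS]; simp only [Finset.mem_insert, Finset.mem_image]
    exact Or.inr (Or.inr ⟨j0, mem_univ j0, rfl⟩))
  obtain ⟨z4, hz4T, hz4⟩ := hget (b j1 : ℚ) (by
    rw [hS]; simp only [Finset.mem_insert, Finset.mem_image]
    exact Or.inr (Or.inr ⟨j1, mem_univ j1, rfl⟩))
  -- all roots are casts of naturals < p
  have hnat : ∀ z ∈ T, ∃ n : ℕ, z = (n : ℚ) ∧ n < p := by
    intro z hz
    rcases (hmemT z).mp hz with rfl | ⟨i, rfl⟩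
    · exact ⟨0, by simp, hp0⟩
    · exact ⟨a i, rfl, hap i⟩
  obtain ⟨n1, hn1, hn1p⟩ := hnat z1 hz1T
  obtain ⟨n2, hn2, hn2p⟩ := hnat z2 hz2T
  obtain ⟨n3, hn3, hn3p⟩ := hnat z3 hz3T
  obtain ⟨n4, hn4, hn4p⟩ := hnat z4 hz4T
  -- difference equations
  have e12 := key z1 z2 ((hmemT z1).mp hz1T) ((hmemT z2).mp hz2T)
  have e34 := key z3 z4 ((hmemT z3).mp hz3T) ((hmemT z4).mp hz4T)
  have e14 := key z1 z4 ((hmemT z1).mp hz1T) ((hmemT z4).mp hz4T)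
  have e32 := key z3 z2 ((hmemT z3).mp hz3T) ((hmemT z2).mp hz2T)
  rw [hz1, hz2] at e12
  rw [hz3, hz4] at e34
  rw [hz1, hz4] at e14
  rw [hz3, hz2] at e32
  -- cross-ratio equality
  have crossQ : (p : ℚ) * ((b j0 : ℚ) - (b j1 : ℚ)) * ((z1 - z4) * (z3 - z2)) =
      ((p : ℚ) - (b j1 : ℚ)) * (b j0 : ℚ) * ((z1 - z2) * (z3 - z4)) := by
    rw [e12, e34, e14, e32]
    field_simp
    ring
  -- to integers
  rw [hn1, hn2, hn3, hn4] at crossQ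
  have crossZ : (p : ℤ) * ((b j0 : ℤ) - (b j1 : ℤ)) * (((n1:ℤ) - n4) * ((n3:ℤ) - n2)) =
      ((p : ℤ) - (b j1 : ℤ)) * (b j0 : ℤ) * (((n1:ℤ) - n2) * ((n3:ℤ) - n4)) := by
    exact_mod_cast crossQ
  -- p divides the LHS hence the RHS
  have hpZ : Prime (p : ℤ) := Nat.prime_iff_prime_int.mp hp
  have hdvd : (p : ℤ) ∣ ((p : ℤ) - (b j1 : ℤ)) * (b j0 : ℤ) * (((n1:ℤ) - n2) * ((n3:ℤ) - n4)) := by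
    rw [← crossZ]
    exact ⟨((b j0 : ℤ) - (b j1 : ℤ)) * (((n1:ℤ) - n4) * ((n3:ℤ) - n2)), by ring⟩
  -- distinctness of roots
  have hne12 : n1 ≠ n2 := by
    intro h
    have hzz : z1 = z2 := by rw [hn1, hn2, h]
    rw [hzz, hz2] at hz1
    exact (by exact_mod_cast hp0.ne' : (p:ℚ) ≠ 0) hz1.symm
  have hne34 : n3 ≠ n4 := by
    intro h
    have hzz : z3 = z4 := by rw [hn3, hn4, h]
    rw [hzz, hz4] at hz3
    exact hbne (by exact_mod_cast hz3.symm)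
  -- contradiction: p divides none of the factors
  have hb0p := hb0 j0
  have hb1p := hb0 j1
  have hbp0 := hbp j0
  have hbp1 := hbp j1
  rcases (hpZ.dvd_mul.mp hdvd) with h | h
  · rcases (hpZ.dvd_mul.mp h) with h | h
    · exact aux_not_dvd p _ (by omega) (by omega) (by omega) h
    · exact aux_not_dvd p _ (by omega) (by omega) (by omega) h
  · rcases (hpZ.dvd_mul.mp h) with h | h
    · exact aux_not_dvd p _ (by omega) (by omega) (by omega) h
    · exact aux_not_dvd p _ (by omega) (by omega) (by omega) h
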